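/- Let p ∈ ℤ[X] be a monic polynomial of degree 4 with constant coefficient 1, and let r ∈ ℝ be a root of p of multiplicity at least 3, i.e. (X − r)³ divides p in ℝ[X]. Then r = 1 or r = −1. -/

import Mathlib

open Polynomial
theorem auxCube (q : ℚ) (n : ℤ) (h : q ^ 3 = (n : ℚ)) : ∃ m : ℤ, (m : ℚ) = q := by
  have hden : q.den ^ 3 = 1 := by
    have := congrArg Rat.den h
    simpa [Rat.den_pow] using this
  have h1 : q.den = 1 := (pow_eq_one_iff.mp hden).resolve_right three_ne_zero
  exact ⟨q.num, by rw [← Rat.num_div_den q, h1]; simp⟩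
theorem auxSq (k l : ℤ) (hk : k ≠ 0) (h : l ^ 2 = k ^ 2 + 4) : False := by
  have hk1 : 1 ≤ k ^ 2 := by rcases hk.lt_or_gt with h'|h' <;> nlinarith
  have h1 : |k| ^ 2 = k ^ 2 := sq_abs k
  have h2 : |l| ^ 2 = l ^ 2 := sq_abs l
  have hbk : 1 ≤ |k| := by nlinarith [abs_nonneg k]
  have hlt : |k| < |l| := by nlinarith [abs_nonneg l]
  have hb1 : |k| = 1 := by nlinarith
  have h5 : |l| ^ 2 = 5 := by rw [h2, h]; nlinarith
  have hl2 : 2 ≤ |l| := by nlinarith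
  have hl3 : |l| ≤ 2 := by nlinarith
  nlinarith
/-- Let `p ∈ ℤ[X]` be a monic polynomial of degree `4` with
constant coefficient `1`, and let `r ∈ ℝ` be a root of `p` of multiplicity at least
`3`, i.e. `(X − r)³` divides (the image of) `p` in `ℝ[X]`.  Then `r = 1` or `r = −1`. -/
theorem stmt19
    (p : Polynomial ℤ) (hmonic : p.Monic) (hdeg : p.natDegree = 4)
    (hconst : p.coeff 0 = 1)
    (r : ℝ)
    (hroot : (Polynomial.X - Polynomial.C r) ^ 3 ∣ p.map (Int.castRingHom ℝ)) :
    r = 1 ∨ r = -1 := by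
  set q : Polynomial ℝ := p.map (Int.castRingHom ℝ) with hqdef
  have hqm : q.Monic := hmonic.map _
  have hqdeg : q.natDegree = 4 := by
    rw [hqdef, natDegree_map_eq_of_injective (fun a b h => by simpa using h)] ; exact hdeg
  obtain ⟨g, hg⟩ := hroot
  have hxm : ((X - C r) ^ 3 : Polynomial ℝ).Monic := (monic_X_sub_C r).pow 3
  have hgm : g.Monic := hxm.of_mul_monic_left (hg ▸ hqm)
  have hgdeg : g.natDegree = 1 := by
    have h3 : ((X - C r) ^ 3 : Polynomial ℝ).natDegree = 3 := by
      simp [natDegree_pow, natDegree_X_sub_C]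
    have := natDegree_mul (hxm.ne_zero) (hgm.ne_zero)
    rw [← hg, hqdeg, h3] at this
    omega
  set s : ℝ := -(g.coeff 0) with hsdef
  have hgeq : g = X - C s := by
    rw [hsdef, map_neg, sub_neg_eq_add]; exact hgm.eq_X_add_C hgdeg
  have hq : q = (X - C r) ^ 3 * (X - C s) := by rw [hg, hgeq]
  have hexp : ((X - C r) ^ 3 * (X - C s) : Polynomial ℝ) =
      X ^ 4 + C (-(3*r+s)) * X ^ 3 + C (3*r^2+3*r*s) * X ^ 2
        + C (-(r^3+3*r^2*s)) * X + C (r^3*s) := by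
    simp only [map_add, map_mul, map_neg, map_pow, map_ofNat]
    ring
  rw [hexp] at hq
  have hcoeff : ∀ i, q.coeff i = ((p.coeff i : ℤ) : ℝ) := by
    intro i; rw [hqdef, coeff_map]; simp
  have e0 : r ^ 3 * s = 1 := by
    have := hcoeff 0
    rw [hq, hconst] at this
    simp only [coeff_add, coeff_C_mul, coeff_X_pow, coeff_X, coeff_C] at this
    norm_num at this
    linarith
  have eA : ((p.coeff 3 : ℤ) : ℝ) = -(3*r+s) := by
    have := hcoeff 3
    rw [hq] at this
    simp only [coeff_add, coeff_C_mul, coeff_X_pow, coeff_X, coeff_C] at this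
    norm_num at this
    linarith
  have eB : ((p.coeff 2 : ℤ) : ℝ) = 3*r^2+3*r*s := by
    have := hcoeff 2
    rw [hq] at this
    simp only [coeff_add, coeff_C_mul, coeff_X_pow, coeff_X, coeff_C] at this
    norm_num at this
    linarith
  have eC : ((p.coeff 1 : ℤ) : ℝ) = -(r^3+3*r^2*s) := by
    have := hcoeff 1
    rw [hq] at this
    simp only [coeff_add, coeff_C_mul, coeff_X_pow, coeff_X, coeff_C] at this
    norm_num at this
    linarith
  clear hq hexp hcoeff hg hgeq hsdef hgdeg hgm hxm hqdeg hqm hqdef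
  set A := p.coeff 3 with hA
  set B := p.coeff 2 with hB
  set Cc := p.coeff 1 with hCc
  have hr0 : r ≠ 0 := by intro h; rw [h] at e0; norm_num at e0
  have hs : s = (r ^ 3)⁻¹ := by
    field_simp
    linarith [e0]
  set u := r + r⁻¹ with hu
  set v := r - r⁻¹ with hv
  have hu3 : u ^ 3 = -((A : ℝ) + (Cc : ℝ)) := by
    rw [hu, eA, eC, hs]; field_simp; ring
  have hv3 : v ^ 3 = (A : ℝ) - (Cc : ℝ) := by
    rw [hv, eA, eC, hs]; field_simp; ring
  have hu2 : 3 * u ^ 2 = (B : ℝ) + 6 := by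
    rw [hu, eB, hs]; field_simp; ring
  have hv2 : 3 * v ^ 2 = (B : ℝ) - 6 := by
    rw [hv, eB, hs]; field_simp; ring
  by_cases hvz : v = 0
  · have hr2 : r * r = 1 := by
      have h' : r - r⁻¹ = 0 := hvz
      field_simp at h'
      nlinarith [h']
    have h2 : (r - 1) * (r + 1) = 0 := by nlinarith
    rcases mul_eq_zero.mp h2 with h | h
    · left; linarith
    · right; linarith
  · exfalso
    have huz : u ≠ 0 := by
      intro h
      have h' : r + r⁻¹ = 0 := h
      field_simp at h'
      nlinarith [sq_nonneg r, h']
    have hB6 : (B : ℝ) - 6 ≠ 0 := by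
      intro h
      apply hvz
      have hv0 : v ^ 2 = 0 := by linarith
      exact pow_eq_zero_iff (by norm_num) |>.mp hv0
    have hB6' : (B : ℝ) + 6 ≠ 0 := by
      intro h
      apply huz
      have hu0 : u ^ 2 = 0 := by linarith
      exact pow_eq_zero_iff (by norm_num) |>.mp hu0
    have hBZ : ((B : ℚ) - 6) ≠ 0 := by
      intro h; apply hB6
      have : ((B:ℚ) - 6 : ℚ) = (0:ℚ) := h
      have := congrArg (fun x : ℚ => (x : ℝ)) this
      push_cast at this; linarith
    have hBZ' : ((B : ℚ) + 6) ≠ 0 := by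
      intro h; apply hB6'
      have : ((B:ℚ) + 6 : ℚ) = (0:ℚ) := h
      have := congrArg (fun x : ℚ => (x : ℝ)) this
      push_cast at this; linarith
    have hveq : v * ((B : ℝ) - 6) = 3 * ((A : ℝ) - (Cc : ℝ)) := by
      linear_combination (-v) * hv2 + 3 * hv3
    have hueq : u * ((B : ℝ) + 6) = -3 * ((A : ℝ) + (Cc : ℝ)) := by
      linear_combination (-u) * hu2 + 3 * hu3
    set qv : ℚ := 3 * ((A : ℚ) - (Cc : ℚ)) / ((B : ℚ) - 6) with hqv
    set qu : ℚ := -3 * ((A : ℚ) + (Cc : ℚ)) / ((B : ℚ) + 6) with hqu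
    have hcv : ((qv : ℚ) : ℝ) = v := by
      rw [hqv]; push_cast
      rw [div_eq_iff hB6]
      linarith [hveq]
    have hcu : ((qu : ℚ) : ℝ) = u := by
      rw [hqu]; push_cast
      rw [div_eq_iff hB6']
      linarith [hueq]
    have hqv3 : qv ^ 3 = ((A - Cc : ℤ) : ℚ) := by
      have h' : ((qv ^ 3 : ℚ) : ℝ) = (((A - Cc : ℤ) : ℚ) : ℝ) := by
        push_cast
        rw [hcv, hv3]
      exact_mod_cast h'
    have hqu3 : qu ^ 3 = ((-(A + Cc) : ℤ) : ℚ) := by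
      have h' : ((qu ^ 3 : ℚ) : ℝ) = (((-(A + Cc) : ℤ) : ℚ) : ℝ) := by
        push_cast
        rw [hcu, hu3]
      exact_mod_cast h'
    obtain ⟨k, hk⟩ := auxCube qv (A - Cc) hqv3
    obtain ⟨l, hl⟩ := auxCube qu (-(A + Cc)) hqu3
    have hkv : (k : ℝ) = v := by
      rw [← hcv, ← hk]; push_cast; ring
    have hlu : (l : ℝ) = u := by
      rw [← hcu, ← hl]; push_cast; ring
    have hkz : k ≠ 0 := by
      intro h; apply hvz; rw [← hkv, h]; norm_num
    have h3k : 3 * k ^ 2 = B - 6 := by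
      have h' : ((3 * k ^ 2 : ℤ) : ℝ) = ((B - 6 : ℤ) : ℝ) := by
        push_cast; rw [hkv]; linarith [hv2]
      exact_mod_cast h'
    have h3l : 3 * l ^ 2 = B + 6 := by
      have h' : ((3 * l ^ 2 : ℤ) : ℝ) = ((B + 6 : ℤ) : ℝ) := by
        push_cast; rw [hlu]; linarith [hu2]
      exact_mod_cast h'
    exact auxSq k l hkz (by linarith)
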